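/- For the Conditional Value-at-Risk at level β ∈ (0,1), CVaR_β(Z) = inf_t { t + (1/β)·E[max{Z − t, 0}] }, the standard risk coefficient satisfies sup{ CVaR_β(Z) : E[Z]=0, Var(Z)=1 } = √((1−β)/β). -/

import Mathlib

open MeasureTheory

/-- Any a.e.-strongly-measurable function is integrable w.r.t. a Dirac measure. -/
lemma integrable_dirac_aux {f : ℝ → ℝ} {a : ℝ}
    (hf : AEStronglyMeasurable f (Measure.dirac a)) :
    Integrable f (Measure.dirac a) :=
  (MemLp.of_bound hf ‖f a‖ (by
      rw [MeasureTheory.ae_dirac_eq]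
      exact Filter.eventually_pure.2 le_rfl)).integrable le_rfl

/-- Pointwise bound: `max u 0 ≤ (u + a)^2 / (4a)` for `a > 0`. -/
lemma max_le_sq_aux (u a : ℝ) (ha : 0 < a) : max u 0 ≤ (u + a) ^ 2 / (4 * a) := by
  rw [le_div_iff₀ (by positivity)]
  rcases le_total u 0 with h | h
  · rw [max_eq_right h, zero_mul]; positivity
  · rw [max_eq_left h]; nlinarith [sq_nonneg (u - a)]

/-- Upper bound: CVaR of any zero-mean unit-variance distribution is at most `√((1-β)/β)`. -/
lemma cvar_upper_aux (β : ℝ) (hβ0 : 0 < β) (hβ1 : β < 1) (P : Measure ℝ)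
    (hP : IsProbabilityMeasure P) (hL : MemLp id 2 P)
    (hmean : (∫ z, z ∂P) = 0) (hvar : (∫ z, z ^ 2 ∂P) = 1) :
    (⨅ t : ℝ, (t + β⁻¹ * ∫ z, max (z - t) 0 ∂P)) ≤ Real.sqrt ((1 - β) / β) := by
  have hr0' : 0 < Real.sqrt ((1 - β) / β) :=
    Real.sqrt_pos.2 (div_pos (by linarith) (by linarith))
  have hr2' : β * Real.sqrt ((1 - β) / β) ^ 2 = 1 - β := by
    rw [Real.sq_sqrt (le_of_lt (div_pos (by linarith) (by linarith)))]
    field_simp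
  set r : ℝ := Real.sqrt ((1 - β) / β) with hr_def
  have hr0 : 0 < r := hr0'
  have hr2 : β * r ^ 2 = 1 - β := hr2'
  set a : ℝ := 1 / (2 * β * r) with ha_def
  have ha : 0 < a := by positivity
  set t₀ : ℝ := a * (1 - 2 * β) with ht0_def
  -- integrability facts
  have hZ1 : Integrable (fun z : ℝ => z) P := hL.integrable one_le_two
  have hZ2 : Integrable (fun z : ℝ => z ^ 2) P := hL.integrable_sq
  have hmax : Integrable (fun z : ℝ => max (z - t₀) 0) P :=
    (hZ1.sub (integrable_const t₀)).pos_part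
  have hquad_eq : (fun z : ℝ => (z - t₀ + a) ^ 2 / (4 * a))
      = fun z : ℝ => (z ^ 2 + (2 * (a - t₀)) * z + (a - t₀) ^ 2) / (4 * a) := by
    funext z; ring
  have i1 : Integrable (fun z : ℝ => z ^ 2 + 2 * (a - t₀) * z) P := hZ2.add (hZ1.const_mul _)
  have i2 : Integrable (fun z : ℝ => z ^ 2 + 2 * (a - t₀) * z + (a - t₀) ^ 2) P :=
    i1.add (integrable_const _)
  have hquad : Integrable (fun z : ℝ => (z - t₀ + a) ^ 2 / (4 * a)) P := by
    rw [hquad_eq]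
    exact i2.div_const _
  -- value of the quadratic integral
  have hquad_val : (∫ z, (z - t₀ + a) ^ 2 / (4 * a) ∂P) = (1 + (a - t₀) ^ 2) / (4 * a) := by
    rw [hquad_eq]
    rw [integral_div]
    have : (∫ z, (z ^ 2 + (2 * (a - t₀)) * z + (a - t₀) ^ 2) ∂P)
        = (∫ z, z ^ 2 ∂P) + (2 * (a - t₀)) * (∫ z, z ∂P) + (a - t₀) ^ 2 := by
      rw [integral_add i1 (integrable_const _),
        integral_add hZ2 (hZ1.const_mul _), integral_const_mul, integral_const]
      simp [measure_univ]
    rw [this, hmean, hvar]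
    ring
  -- bound the positive-part integral
  have hbound : (∫ z, max (z - t₀) 0 ∂P) ≤ (1 + (a - t₀) ^ 2) / (4 * a) := by
    rw [← hquad_val]
    exact integral_mono hmax hquad (fun z => max_le_sq_aux (z - t₀) a ha)
  -- the final algebraic identity
  have hab : a - t₀ = 1 / r := by
    rw [ht0_def, ha_def]; field_simp; ring
  have hkey : t₀ + β⁻¹ * ((1 + (a - t₀) ^ 2) / (4 * a)) = r := by
    rw [hab, ht0_def, ha_def]
    field_simp
    linear_combination (-4) * hr2
  have hle : t₀ + β⁻¹ * (∫ z, max (z - t₀) 0 ∂P) ≤ r := by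
    rw [← hkey]
    have : (0:ℝ) < β⁻¹ := by positivity
    nlinarith [hbound]
  by_cases hbdd : BddBelow (Set.range fun t : ℝ => t + β⁻¹ * ∫ z, max (z - t) 0 ∂P)
  · exact le_trans (ciInf_le hbdd t₀) hle
  · rw [Real.iInf_of_not_bddBelow hbdd]
    exact hr0.le

theorem cvar_standard_risk_coefficient (β : ℝ) (hβ : β ∈ Set.Ioo (0 : ℝ) 1) :
    sSup {c : ℝ | ∃ P : Measure ℝ, IsProbabilityMeasure P ∧
        MemLp id 2 P ∧
        (∫ z, z ∂P) = 0 ∧ (∫ z, z ^ 2 ∂P) = 1 ∧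
        c = ⨅ t : ℝ, (t + β⁻¹ * ∫ z, max (z - t) 0 ∂P)} =
      Real.sqrt ((1 - β) / β) := by
  obtain ⟨hβ0, hβ1⟩ := hβ
  have hr0' : 0 < Real.sqrt ((1 - β) / β) :=
    Real.sqrt_pos.2 (div_pos (by linarith) (by linarith))
  have hr2' : β * Real.sqrt ((1 - β) / β) ^ 2 = 1 - β := by
    rw [Real.sq_sqrt (le_of_lt (div_pos (by linarith) (by linarith)))]
    field_simp
  set r : ℝ := Real.sqrt ((1 - β) / β) with hr_def
  have hr0 : 0 < r := hr0'
  have hr2 : β * r ^ 2 = 1 - β := hr2'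
  have h1β : (0:ℝ) < 1 - β := by linarith
  set y : ℝ := -(β * r / (1 - β)) with hy_def
  have hy0 : y < 0 := by
    rw [hy_def]; simp only [neg_neg, neg_lt, neg_zero]; positivity
  -- the extremal two-point measure
  set P : Measure ℝ := ENNReal.ofReal β • Measure.dirac r + ENNReal.ofReal (1 - β) • Measure.dirac y
    with hP_def
  -- integral formula against P
  have hint : ∀ f : ℝ → ℝ, Measurable f →
      (∫ z, f z ∂P) = β * f r + (1 - β) * f y := by
    intro f hf
    have h1 : Integrable f (ENNReal.ofReal β • Measure.dirac r) :=
      (integrable_dirac_aux hf.aestronglyMeasurable).smul_measure ENNReal.ofReal_ne_top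
    have h2 : Integrable f (ENNReal.ofReal (1 - β) • Measure.dirac y) :=
      (integrable_dirac_aux hf.aestronglyMeasurable).smul_measure ENNReal.ofReal_ne_top
    rw [hP_def, integral_add_measure h1 h2, integral_smul_measure, integral_smul_measure,
      integral_dirac, integral_dirac, ENNReal.toReal_ofReal hβ0.le,
      ENNReal.toReal_ofReal h1β.le, smul_eq_mul, smul_eq_mul]
  have hprob : IsProbabilityMeasure P := by
    constructor
    rw [hP_def]
    simp only [Measure.add_apply, Measure.smul_apply, smul_eq_mul, measure_univ, mul_one]
    rw [← ENNReal.ofReal_add hβ0.le h1β.le]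
    norm_num
  have hmemLp : MemLp id 2 P := by
    refine MemLp.of_bound measurable_id.aestronglyMeasurable (max |r| |y|) ?_
    rw [hP_def, ae_add_measure_iff]
    constructor
    · refine Measure.ae_smul_measure ?_ _
      rw [MeasureTheory.ae_dirac_eq]
      exact Filter.eventually_pure.2 (by simp [Real.norm_eq_abs])
    · refine Measure.ae_smul_measure ?_ _
      rw [MeasureTheory.ae_dirac_eq]
      exact Filter.eventually_pure.2 (by simp [Real.norm_eq_abs])
  have hy2 : y ^ 2 = β / (1 - β) := by
    rw [hy_def]
    field_simp
    linear_combination hr2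
  have hmean : (∫ z, z ∂P) = 0 := by
    have := hint (fun z => z) measurable_id
    rw [this, hy_def]
    field_simp
    ring
  have hvar : (∫ z, z ^ 2 ∂P) = 1 := by
    have := hint (fun z => z ^ 2) (measurable_id.pow_const 2)
    rw [this, hy2]
    field_simp
    linarith [hr2]
  -- the CVaR of P equals r
  have hmaxint : ∀ t : ℝ, (∫ z, max (z - t) 0 ∂P)
      = β * max (r - t) 0 + (1 - β) * max (y - t) 0 := fun t =>
    hint _ ((measurable_id.sub_const t).max measurable_const)
  have hflb : ∀ t : ℝ, r ≤ t + β⁻¹ * ∫ z, max (z - t) 0 ∂P := by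
    intro t
    rw [hmaxint t]
    have h1 : r - t ≤ max (r - t) 0 := le_max_left _ _
    have h2 : (0:ℝ) ≤ max (y - t) 0 := le_max_right _ _
    have heq : β⁻¹ * (β * max (r - t) 0 + (1 - β) * max (y - t) 0)
        = max (r - t) 0 + β⁻¹ * (1 - β) * max (y - t) 0 := by
      field_simp
    rw [heq]
    have h3 : 0 ≤ β⁻¹ * (1 - β) * max (y - t) 0 := by positivity
    linarith
  have hinf : (⨅ t : ℝ, (t + β⁻¹ * ∫ z, max (z - t) 0 ∂P)) = r := by
    apply le_antisymm
    · have : r + β⁻¹ * (∫ z, max (z - r) 0 ∂P) = r := by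
        rw [hmaxint r]
        rw [max_eq_right (by linarith : y - r ≤ 0)]
        simp
      have hbdd : BddBelow (Set.range fun t : ℝ => t + β⁻¹ * ∫ z, max (z - t) 0 ∂P) := by
        refine ⟨r, ?_⟩
        rintro x ⟨t, rfl⟩
        exact hflb t
      calc (⨅ t : ℝ, (t + β⁻¹ * ∫ z, max (z - t) 0 ∂P))
          ≤ r + β⁻¹ * (∫ z, max (z - r) 0 ∂P) := ciInf_le hbdd r
        _ = r := this
    · exact le_ciInf hflb
  -- conclude
  have hub : r ∈ upperBounds {c : ℝ | ∃ P : Measure ℝ, IsProbabilityMeasure P ∧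
      MemLp id 2 P ∧ (∫ z, z ∂P) = 0 ∧ (∫ z, z ^ 2 ∂P) = 1 ∧
      c = ⨅ t : ℝ, (t + β⁻¹ * ∫ z, max (z - t) 0 ∂P)} := by
    rintro c ⟨Q, hQ, hQL, hQm, hQv, rfl⟩
    exact cvar_upper_aux β hβ0 hβ1 Q hQ hQL hQm hQv
  have hmem : r ∈ {c : ℝ | ∃ P : Measure ℝ, IsProbabilityMeasure P ∧
      MemLp id 2 P ∧ (∫ z, z ∂P) = 0 ∧ (∫ z, z ^ 2 ∂P) = 1 ∧
      c = ⨅ t : ℝ, (t + β⁻¹ * ∫ z, max (z - t) 0 ∂P)} :=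
    ⟨P, hprob, hmemLp, hmean, hvar, hinf.symm⟩
  exact le_antisymm (csSup_le ⟨r, hmem⟩ hub) (le_csSup ⟨r, hub⟩ hmem)
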